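/- Fix n ≥ 1 and p ∈ (1/2, 1), and consider a big-vs-small tournament on N = 2^n players with big-beats-small probability p (entries between two big or between two small players arbitrary). Define e_1 = p and e_{k+1} = e_k² + 2p·e_k·(1 − e_k). Then for every draw σ, the probability that a big player wins, b(P,σ) = Σ_{i ∈ B} wp(i,P,σ), satisfies b(P,σ) ≤ e_n, and equality holds if and only if σ is a mixed draw. In particular, the draws maximizing the probability of a big player winning are precisely the mixed draws. -/

import Mathlib

set_option linter.unusedSectionVars false
set_option maxHeartbeats 800000


/-- A perfect (balanced) binary tree of depth `n` with leaves labelled by `α`. -/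
inductive BT (α : Type) : ℕ → Type
  | leaf : α → BT α 0
  | node {n : ℕ} : BT α n → BT α n → BT α (n + 1)

namespace BT

/-- The list of leaf labels, from left to right. -/
def leaves {α : Type} : ∀ {n : ℕ}, BT α n → List α
  | _, .leaf a => [a]
  | _, .node L R => L.leaves ++ R.leaves

/-- Relabel the leaves of a tree. -/
def map {α β : Type} (f : α → β) : ∀ {n : ℕ}, BT α n → BT β n
  | _, .leaf a => .leaf (f a)
  | _, .node L R => .node (L.map f) (R.map f)

end BT

/-- Two trees represent the same draw iff one can be obtained from the other by
swapping the two children subtrees at internal nodes. -/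
def BTequiv {α : Type} : ∀ {n : ℕ}, BT α n → BT α n → Prop
  | 0, .leaf a, .leaf b => a = b
  | _ + 1, .node L R, .node L' R' =>
      (BTequiv L L' ∧ BTequiv R R') ∨ (BTequiv L R' ∧ BTequiv R L')

/-- A draw: each of the `N` players occurs exactly once among the leaves. -/
def IsDraw {N n : ℕ} (t : BT (Fin N) n) : Prop :=
  ∀ i : Fin N, t.leaves.count i = 1

/-- The winning distribution of a knockout tournament: `wd P t i` is the probability
that player `i` wins the (sub)tournament with draw `t` and comparison matrix `P`. -/
noncomputable def wd {N : ℕ} (P : Fin N → Fin N → ℝ) :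
    ∀ {n : ℕ}, BT (Fin N) n → Fin N → ℝ
  | _, .leaf j => fun i => if i = j then 1 else 0
  | _, .node L R => fun i =>
      wd P L i * (∑ j, wd P R j * P i j) + wd P R i * (∑ j, wd P L j * P i j)

/-- `P` is a comparison matrix. -/
def IsCompMatrix {N : ℕ} (P : Fin N → Fin N → ℝ) : Prop :=
  ∀ i j : Fin N, i ≠ j → 0 ≤ P i j ∧ P i j ≤ 1 ∧ P i j + P j i = 1

/-- `P` is deterministic: every off-diagonal entry is 0 or 1. -/
def IsDet {N : ℕ} (P : Fin N → Fin N → ℝ) : Prop :=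
  ∀ i j : Fin N, i ≠ j → P i j = 0 ∨ P i j = 1

/-- The set `𝒫(P,ε)` of ε-perturbations of `P`. -/
def perturbs {N : ℕ} (P : Fin N → Fin N → ℝ) (ε : ℝ) : Set (Fin N → Fin N → ℝ) :=
  {P' | IsCompMatrix P' ∧ ∀ i j : Fin N, i ≠ j → |P' i j - P i j| ≤ ε}

/-- The ε-guaranteed winning probability `wp_ε(i,P,σ)`. -/
noncomputable def wpe {N n : ℕ} (i : Fin N) (P : Fin N → Fin N → ℝ) (ε : ℝ)
    (t : BT (Fin N) n) : ℝ :=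
  sInf ((fun P' => wd P' t i) '' perturbs P ε)

/-- The comparison matrix of the hard `n`-round tournament `H_n` (players 0-indexed):
for `i < j`, player `i` beats player `j` iff `i = j - 2 ^ v` where `2 ^ v` is the largest
power of 2 dividing `j` (in 0-indexed numbering). -/
noncomputable def hardP (n : ℕ) : Fin (2 ^ n) → Fin (2 ^ n) → ℝ := fun i j =>
  if i = j then 0
  else if (i : ℕ) < (j : ℕ) then
    (if (i : ℕ) + 2 ^ padicValNat 2 (j : ℕ) = (j : ℕ) then 1 else 0)
  else
    (if (j : ℕ) + 2 ^ padicValNat 2 (i : ℕ) = (i : ℕ) then 0 else 1)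

/-- The tree of depth `n` whose leaves are `s, s+1, …, s + 2^n - 1` from left to right. -/
def ordTree : (n : ℕ) → ℕ → BT ℕ n
  | 0, s => .leaf s
  | n + 1, s => .node (ordTree n s) (ordTree n (s + 2 ^ n))

/-- The identity draw, placing players `0, 1, …, 2^n - 1` on the leaves in order. -/
def idDraw (n : ℕ) : BT (Fin (2 ^ n)) n :=
  (ordTree n 0).map (fun k => ⟨k % 2 ^ n, Nat.mod_lt _ (by positivity)⟩)

/-- `f_p(x,y) = p(x+y) + (1-2p)xy`. -/
def fp (p x y : ℝ) : ℝ := p * (x + y) + (1 - 2 * p) * x * y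

/-- `B_p` on trees with real leaf labels. -/
noncomputable def Bp (p : ℝ) : ∀ {n : ℕ}, BT ℝ n → ℝ
  | _, .leaf x => x
  | _, .node L R => fp p (Bp p L) (Bp p R)

/-- Group a list into consecutive pairs. -/
def pairList {α : Type} : List α → List (α × α)
  | a :: b :: rest => (a, b) :: pairList rest
  | _ => []

/-- The first-round matches of a draw: the consecutive sibling pairs of leaves. -/
def firstPairs {α : Type} {n : ℕ} (t : BT α n) : List (α × α) := pairList t.leaves

/-- A draw is mixed (w.r.t. the set `B` of big players) if every first-round match
pairs a big player with a small player. -/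
def MixedDraw {N n : ℕ} (B : Finset (Fin N)) (t : BT (Fin N) n) : Prop :=
  ∀ q ∈ firstPairs t, ((q.1 ∈ B) ↔ q.2 ∉ B)

/-- Number of leaves labelled `1`. -/
noncomputable def ones {n : ℕ} (t : BT ℝ n) : ℕ := t.leaves.count 1

/-- All leaf labels are `0` or `1`. -/
def ZeroOne {n : ℕ} (t : BT ℝ n) : Prop := ∀ x ∈ t.leaves, x = 0 ∨ x = 1

/-- `P[kl←t]`: the matrix agreeing with `P` except `P k l = t` and `P l k = 1 - t`. -/
def updPair {N : ℕ} (P : Fin N → Fin N → ℝ) (k l : Fin N) (t : ℝ) :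
    Fin N → Fin N → ℝ :=
  fun i j => if i = k ∧ j = l then t else if i = l ∧ j = k then 1 - t else P i j

/-- Perturb a deterministic matrix: for each pair `(w, l) ∈ S` (winner first),
set `P w l = 1 - ε` and `P l w = ε`; other entries unchanged. -/
def detPerturb {N : ℕ} (P : Fin N → Fin N → ℝ) (S : Finset (Fin N × Fin N)) (ε : ℝ) :
    Fin N → Fin N → ℝ :=
  fun i j => if (i, j) ∈ S then 1 - ε else if (j, i) ∈ S then ε else P i j

/-- Swap the result of the single match between `a` and `b`. -/
def swapPair {N : ℕ} (P : Fin N → Fin N → ℝ) (a b : Fin N) : Fin N → Fin N → ℝ :=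
  fun i j => if i = a ∧ j = b then P b a else if i = b ∧ j = a then P a b else P i j

/-- The pair `(a,b)` (with `a` the winner) is crucial for `i` in `C(P,σ)`. -/
def Crucial {N n : ℕ} (P : Fin N → Fin N → ℝ) (σ : BT (Fin N) n) (i : Fin N)
    (a b : Fin N) : Prop :=
  a ≠ b ∧ P a b = 1 ∧ wd (swapPair P a b) σ i = 0



namespace MDO

noncomputable def Vf (p : ℝ) : ℕ → ℕ → ℝ
  | 0, c => if c = 0 then 0 else 1
  | h+1, c => fp p (Vf p h ((c+1)/2)) (Vf p h (c/2))

variable {p : ℝ}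

lemma fp_comm (x y : ℝ) : fp p x y = fp p y x := by unfold fp; ring

section hp
variable (hp1 : 1/2 < p) (hp2 : p < 1)
include hp1 hp2

lemma slope_pos {y : ℝ} (hy : y ≤ 1) : 0 < p + (1 - 2*p) * y := by nlinarith

lemma fp_nonneg {x y : ℝ} (hx0 : 0 ≤ x) (hx1 : x ≤ 1) (hy0 : 0 ≤ y) (hy1 : y ≤ 1) :
    0 ≤ fp p x y := by
  have h : fp p x y = p*x*(1-y) + p*y*(1-x) + x*y := by unfold fp; ring
  have hp0 : (0:ℝ) ≤ p := by linarith
  rw [h]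
  have := mul_nonneg (mul_nonneg hp0 hx0) (by linarith : (0:ℝ) ≤ 1 - y)
  have := mul_nonneg (mul_nonneg hp0 hy0) (by linarith : (0:ℝ) ≤ 1 - x)
  have := mul_nonneg hx0 hy0
  linarith

lemma fp_le_one {x y : ℝ} (hx0 : 0 ≤ x) (hx1 : x ≤ 1) (hy0 : 0 ≤ y) (hy1 : y ≤ 1) :
    fp p x y ≤ 1 := by
  have h : 1 - fp p x y = (1-x)*(1-y) + (1-p)*(x*(1-y) + y*(1-x)) := by unfold fp; ring
  have h2 : (0:ℝ) ≤ (1-x)*(1-y) := mul_nonneg (by linarith) (by linarith)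
  have h3 : (0:ℝ) ≤ (1-p)*(x*(1-y) + y*(1-x)) := by
    apply mul_nonneg (by linarith)
    have := mul_nonneg hx0 (by linarith : (0:ℝ) ≤ 1 - y)
    have := mul_nonneg hy0 (by linarith : (0:ℝ) ≤ 1 - x)
    linarith
  linarith

lemma fp_mono {x x' y y' : ℝ} (hx : x ≤ x') (hy : y ≤ y') (hx1 : x' ≤ 1) (hy1 : y ≤ 1) :
    fp p x y ≤ fp p x' y' := by
  have h1 : fp p x' y' - fp p x y
      = (x' - x) * (p + (1-2*p)*y) + (y' - y) * (p + (1-2*p)*x') := by unfold fp; ring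
  nlinarith [slope_pos hp1 hp2 hy1, slope_pos hp1 hp2 hx1,
    mul_nonneg (sub_nonneg.2 hx) (slope_pos hp1 hp2 hy1).le,
    mul_nonneg (sub_nonneg.2 hy) (slope_pos hp1 hp2 hx1).le]

lemma fp_strict_left {x x' y : ℝ} (hx : x < x') (hy1 : y ≤ 1) :
    fp p x y < fp p x' y := by
  have h1 : fp p x' y - fp p x y = (x' - x) * (p + (1-2*p)*y) := by unfold fp; ring
  nlinarith [slope_pos hp1 hp2 hy1, mul_pos (sub_pos.2 hx) (slope_pos hp1 hp2 hy1)]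

lemma Vf_mem : ∀ h c, 0 ≤ Vf p h c ∧ Vf p h c ≤ 1
  | 0, c => by unfold Vf; split <;> norm_num
  | h+1, c => by
      unfold Vf
      obtain ⟨a0, a1⟩ := Vf_mem h ((c+1)/2)
      obtain ⟨b0, b1⟩ := Vf_mem h (c/2)
      exact ⟨fp_nonneg hp1 hp2 a0 a1 b0 b1, fp_le_one hp1 hp2 a0 a1 b0 b1⟩

lemma Vf_nonneg (h c) : 0 ≤ Vf p h c := (Vf_mem hp1 hp2 h c).1

lemma Vf_le_one (h c) : Vf p h c ≤ 1 := (Vf_mem hp1 hp2 h c).2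

end hp
end MDO

namespace MDO2
open MDO

variable {p : ℝ}

lemma Vf_succ (p : ℝ) (h c : ℕ) :
    Vf p (h+1) c = fp p (Vf p h ((c+1)/2)) (Vf p h (c/2)) := rfl

lemma two_pow_succ (h : ℕ) : 2^(h+1) = 2 * 2^h := by ring

section hp
variable (hp1 : 1/2 < p) (hp2 : p < 1)
include hp1 hp2

lemma Vf_lt_succ : ∀ h c, c + 1 ≤ 2^h → Vf p h c < Vf p h (c+1)
  | 0, c, hc => by
      have hc0 : c = 0 := by omega
      subst hc0; unfold Vf; norm_num
  | h+1, c, hc => by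
      have hpow := two_pow_succ h
      rcases Nat.even_or_odd c with ⟨d, hd⟩ | ⟨d, hd⟩
      · subst hd
        have hd1 : d + 1 ≤ 2^h := by omega
        have e0 : (d + d) / 2 = d := by omega
        have e1 : (d + d + 1) / 2 = d := by omega
        have e2 : (d + d + 1 + 1) / 2 = d + 1 := by omega
        rw [Vf_succ, Vf_succ, e0, e1, e2]
        exact fp_strict_left hp1 hp2 (Vf_lt_succ h d hd1) (Vf_le_one hp1 hp2 h d)
      · subst hd
        have hd1 : d + 1 ≤ 2^h := by omega
        have e1 : (2*d + 1 + 1) / 2 = d + 1 := by omega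
        have e2 : (2*d + 1) / 2 = d := by omega
        have e3 : (2*d + 1 + 1 + 1) / 2 = d + 1 := by omega
        rw [Vf_succ, Vf_succ, e1, e2, e3]
        rw [fp_comm (Vf p h (d+1)) (Vf p h d), fp_comm (Vf p h (d+1)) (Vf p h (d+1))]
        exact fp_strict_left hp1 hp2 (Vf_lt_succ h d hd1) (Vf_le_one hp1 hp2 h (d+1))

lemma Vf_lt (h : ℕ) : ∀ a b, a < b → b ≤ 2^h → Vf p h a < Vf p h b := by
  intro a b
  induction b with
  | zero => omega
  | succ b ih =>
      intro hab hb
      rcases Nat.lt_or_ge a b with hab' | hab'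
      · exact (ih hab' (by omega)).trans (Vf_lt_succ hp1 hp2 h b hb)
      · have : a = b := by omega
        subst this
        exact Vf_lt_succ hp1 hp2 h a hb

end hp
end MDO2

namespace MDO3
open MDO MDO2

noncomputable def Rf (p : ℝ) (h c : ℕ) : ℝ :=
  (Vf p h (c+1) - Vf p h c) / (p + (1 - 2*p) * Vf p h c)

variable {p : ℝ}

lemma key_i {x y : ℝ} :
    (p + (1-2*p)*x) * (p + (1-2*p)*(fp p y x)) - (p + (1-2*p)*y) * (p + (1-2*p)*(fp p x x))
      = (y - x) * ((2*p-1) * (p * (1-p))) := by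
  unfold fp; ring

lemma key_ii {x y : ℝ} :
    (p + (1-2*p)*x) * (p + (1-2*p)*(fp p y y)) - (p + (1-2*p)*y) * (p + (1-2*p)*(fp p y x))
      = (y - x) * ((2*p-1) * (p * (1-p))) := by
  unfold fp; ring

section hp
variable (hp1 : 1/2 < p) (hp2 : p < 1)
include hp1 hp2

lemma qpp_pos : 0 < (2*p-1) * (p * (1-p)) := by
  apply mul_pos (by linarith) (mul_pos (by linarith) (by linarith))

lemma R_adj : ∀ h c, c + 2 ≤ 2^h → Rf p h (c+1) < Rf p h c
  | 0, c, hc => by omega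
  | h+1, c, hc => by
      have hpow := two_pow_succ h
      rcases Nat.even_or_odd c with ⟨d, hd⟩ | ⟨d, hd⟩
      · -- c = 2d : uses key_i
        subst hd
        have hd1 : d + 1 ≤ 2^h := by omega
        set x := Vf p h d with hxdef
        set y := Vf p h (d+1) with hydef
        have hxy : x < y := Vf_lt_succ hp1 hp2 h d hd1
        have hx0 := Vf_nonneg hp1 hp2 h d
        have hx1 := Vf_le_one hp1 hp2 h d
        have hy0 := Vf_nonneg hp1 hp2 h (d+1)
        have hy1 := Vf_le_one hp1 hp2 h (d+1)
        have e0 : (d + d) / 2 = d := by omega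
        have e1 : (d + d + 1) / 2 = d := by omega
        have e2 : (d + d + 1 + 1) / 2 = d + 1 := by omega
        have e3 : (d + d + 1 + 1 + 1) / 2 = d + 1 := by omega
        have v0 : Vf p (h+1) (d+d) = fp p x x := by rw [Vf_succ, e1, e0]
        have v1 : Vf p (h+1) (d+d+1) = fp p y x := by rw [Vf_succ, e2, e1]
        have v2 : Vf p (h+1) (d+d+1+1) = fp p y y := by rw [Vf_succ, e3, e2]
        unfold Rf
        rw [v0, v1, v2]
        have hsfxx : 0 < p + (1-2*p) * fp p x x :=
          slope_pos hp1 hp2 (fp_le_one hp1 hp2 hx0 hx1 hx0 hx1)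
        have hsfyx : 0 < p + (1-2*p) * fp p y x :=
          slope_pos hp1 hp2 (fp_le_one hp1 hp2 hy0 hy1 hx0 hx1)
        rw [div_lt_div_iff₀ hsfyx hsfxx]
        have num1 : fp p y x - fp p x x = (y - x) * (p + (1-2*p)*x) := by unfold fp; ring
        have num2 : fp p y y - fp p y x = (y - x) * (p + (1-2*p)*y) := by unfold fp; ring
        rw [num1, num2]
        have hkey := key_i (x := x) (y := y) (p := p)
        have hgap : 0 < (y - x) * ((y - x) * ((2*p-1) * (p * (1-p)))) :=
          mul_pos (by linarith) (mul_pos (by linarith) (qpp_pos hp1 hp2))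
        have expand : (y - x) * (p + (1-2*p)*x) * (p + (1-2*p)*(fp p y x))
            - (y - x) * (p + (1-2*p)*y) * (p + (1-2*p)*(fp p x x))
            = (y - x) * ((y - x) * ((2*p-1) * (p * (1-p)))) := by
          linear_combination (y - x) * hkey
        linarith [expand, hgap]
      · -- c = 2d+1 : uses key_ii and IH
        subst hd
        have hd2 : d + 2 ≤ 2^h := by omega
        have IH := R_adj h d (by omega)
        set x := Vf p h d with hxdef
        set y := Vf p h (d+1) with hydef
        set z := Vf p h (d+2) with hzdef
        have hxy : x < y := Vf_lt_succ hp1 hp2 h d (by omega)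
        have hx0 := Vf_nonneg hp1 hp2 h d
        have hx1 := Vf_le_one hp1 hp2 h d
        have hy0 := Vf_nonneg hp1 hp2 h (d+1)
        have hy1 := Vf_le_one hp1 hp2 h (d+1)
        have e1 : (2*d + 1 + 1) / 2 = d + 1 := by omega
        have e2 : (2*d + 1) / 2 = d := by omega
        have e3 : (2*d + 1 + 1 + 1) / 2 = d + 1 := by omega
        have e4 : (2*d + 1 + 1 + 1 + 1) / 2 = d + 2 := by omega
        have v1 : Vf p (h+1) (2*d+1) = fp p y x := by rw [Vf_succ, e1, e2]
        have v2 : Vf p (h+1) (2*d+1+1) = fp p y y := by rw [Vf_succ, e3, e1]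
        have v3 : Vf p (h+1) (2*d+1+1+1) = fp p z y := by rw [Vf_succ, e4, e3]
        unfold Rf
        rw [v1, v2, v3]
        have hsx : 0 < p + (1-2*p) * x := slope_pos hp1 hp2 hx1
        have hsy : 0 < p + (1-2*p) * y := slope_pos hp1 hp2 hy1
        have hsfyx : 0 < p + (1-2*p) * fp p y x :=
          slope_pos hp1 hp2 (fp_le_one hp1 hp2 hy0 hy1 hx0 hx1)
        have hsfyy : 0 < p + (1-2*p) * fp p y y :=
          slope_pos hp1 hp2 (fp_le_one hp1 hp2 hy0 hy1 hy0 hy1)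
        rw [div_lt_div_iff₀ hsfyy hsfyx]
        have num2 : fp p y y - fp p y x = (y - x) * (p + (1-2*p)*y) := by unfold fp; ring
        have num3 : fp p z y - fp p y y = (z - y) * (p + (1-2*p)*y) := by unfold fp; ring
        rw [num2, num3]
        -- IH : (z - y)/s y < (y - x)/s x
        have IH' : (z - y) * (p + (1-2*p)*x) < (y - x) * (p + (1-2*p)*y) := by
          have := (div_lt_div_iff₀ hsy hsx).mp IH
          linarith
        have hkey := key_ii (x := x) (y := y) (p := p)
        have hkey2 : (p + (1-2*p)*y) * (p + (1-2*p)*(fp p y x))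
            < (p + (1-2*p)*x) * (p + (1-2*p)*(fp p y y)) := by
          have hpos : 0 < (y - x) * ((2*p-1) * (p * (1-p))) :=
            mul_pos (by linarith) (qpp_pos hp1 hp2)
          linarith [hkey, hpos]
        -- goal : (z-y)*s y*s(fp y x) < (y-x)*s y*s(fp y y)
        -- multiply IH' by s(fp y x) and hkey2 by (y-x), then cancel s x
        have h1 : (z - y) * (p + (1-2*p)*x) * (p + (1-2*p)*(fp p y x))
            < (y - x) * (p + (1-2*p)*y) * (p + (1-2*p)*(fp p y x)) :=
          mul_lt_mul_of_pos_right IH' hsfyx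
        have h2 : (y - x) * ((p + (1-2*p)*y) * (p + (1-2*p)*(fp p y x)))
            < (y - x) * ((p + (1-2*p)*x) * (p + (1-2*p)*(fp p y y))) :=
          mul_lt_mul_of_pos_left hkey2 (by linarith)
        have h4 : (p + (1-2*p)*x) * ((z - y) * (p + (1-2*p)*(fp p y x)))
            < (p + (1-2*p)*x) * ((y - x) * (p + (1-2*p)*(fp p y y))) := by linarith [h1, h2]
        have h5 := (mul_lt_mul_iff_right₀ hsx).mp h4
        have h6 : (p + (1-2*p)*y) * ((z - y) * (p + (1-2*p)*(fp p y x)))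
            < (p + (1-2*p)*y) * ((y - x) * (p + (1-2*p)*(fp p y y))) :=
          mul_lt_mul_of_pos_left h5 hsy
        linarith [h6]

lemma R_lt (h a : ℕ) : ∀ b, a < b → b + 1 ≤ 2^h → Rf p h b < Rf p h a := by
  intro b
  induction b with
  | zero => omega
  | succ b ih =>
      intro hab hb
      rcases Nat.lt_or_ge a b with hab' | hab'
      · exact (R_adj hp1 hp2 h b (by omega)).trans (ih hab' (by omega))
      · have : a = b := by omega
        subst this
        exact R_adj hp1 hp2 h a (by omega)

/-- strict exchange step: from `(a, b'+1)` to `(a+1, b')`. -/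
lemma conc' (h a b' : ℕ) (hab : a + 1 ≤ b') (hb : b' + 1 ≤ 2^h) :
    fp p (Vf p h a) (Vf p h (b'+1)) < fp p (Vf p h (a+1)) (Vf p h b') := by
  have hR := R_lt hp1 hp2 h a b' (by omega) hb
  have hsa : 0 < p + (1-2*p) * Vf p h a := slope_pos hp1 hp2 (Vf_le_one hp1 hp2 h a)
  have hsb : 0 < p + (1-2*p) * Vf p h b' := slope_pos hp1 hp2 (Vf_le_one hp1 hp2 h b')
  have cross : (Vf p h (b'+1) - Vf p h b') * (p + (1-2*p) * Vf p h a)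
      < (Vf p h (a+1) - Vf p h a) * (p + (1-2*p) * Vf p h b') := by
    have := (div_lt_div_iff₀ hsb hsa).mp hR
    linarith
  have id1 : fp p (Vf p h (a+1)) (Vf p h b') - fp p (Vf p h a) (Vf p h (b'+1))
      = (Vf p h (a+1) - Vf p h a) * (p + (1-2*p) * Vf p h b')
        + (Vf p h b' - Vf p h (b'+1)) * (p + (1-2*p) * Vf p h a) := by
    unfold fp; ring
  linarith [id1, cross]

lemma bal (h c : ℕ) : ∀ k, 1 ≤ k → k ≤ c → c + k ≤ 2^h →
    fp p (Vf p h (c-k)) (Vf p h (c+k)) < fp p (Vf p h c) (Vf p h c) := by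
  intro k
  induction k with
  | zero => omega
  | succ k ih =>
      intro _ hkc hck
      rcases Nat.eq_or_lt_of_le (show 1 ≤ k + 1 from by omega) with h1 | h1
      · -- k + 1 = 1
        have hk0 : k = 0 := by omega
        subst hk0
        have e1 : c - 1 + 1 = c := by omega
        have := conc' hp1 hp2 h (c-1) c (by omega) (by omega)
        rw [e1] at this
        exact this
      · -- k ≥ 1
        have hstep := conc' hp1 hp2 h (c-(k+1)) (c+k) (by omega) (by omega)
        have e1 : c - (k+1) + 1 = c - k := by omega
        have e2 : c + k + 1 = c + (k+1) := by omega
        rw [e1] at hstep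
        rw [← e2]
        exact hstep.trans (ih (by omega) (by omega) (by omega))

lemma balOdd (h c : ℕ) : ∀ k, k ≤ c → c + 1 + k ≤ 2^h →
    fp p (Vf p h (c-k)) (Vf p h (c+1+k)) ≤ fp p (Vf p h (c+1)) (Vf p h c) := by
  intro k
  induction k with
  | zero =>
      intro _ _
      simp only [Nat.sub_zero, Nat.add_zero]
      rw [fp_comm]
  | succ k ih =>
      intro hkc hck
      have hstep := conc' hp1 hp2 h (c-(k+1)) (c+1+k) (by omega) (by omega)
      have e1 : c - (k+1) + 1 = c - k := by omega
      rw [e1] at hstep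
      have e2 : c + 1 + (k+1) = c + 1 + k + 1 := by omega
      rw [e2]
      exact hstep.le.trans (ih (by omega) (by omega))

lemma balGen (h a b : ℕ) (hab : a ≤ b) (hb : b ≤ 2^h) :
    fp p (Vf p h a) (Vf p h b) ≤ fp p (Vf p h ((a+b+1)/2)) (Vf p h ((a+b)/2)) := by
  rcases Nat.even_or_odd (a+b) with ⟨c, hc⟩ | ⟨c, hc⟩
  · have e1 : (a+b+1)/2 = c := by omega
    have e2 : (a+b)/2 = c := by omega
    rw [e1, e2]
    rcases Nat.eq_or_lt_of_le (show a ≤ c by omega) with h1 | h1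
    · subst h1
      have : b = a := by omega
      subst this
      exact le_refl _
    · have e3 : c - (c - a) = a := by omega
      have e4 : c + (c - a) = b := by omega
      have := bal hp1 hp2 h c (c - a) (by omega) (by omega) (by omega)
      rw [e3, e4] at this
      exact this.le
  · have e1 : (a+b+1)/2 = c+1 := by omega
    have e2 : (a+b)/2 = c := by omega
    rw [e1, e2]
    have e3 : c - (c - a) = a := by omega
    have e4 : c + 1 + (c - a) = b := by omega
    have := balOdd hp1 hp2 h c (c - a) (by omega) (by omega)
    rw [e3, e4] at this
    exact this

/-- strict unbalanced bound at an even total. -/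
lemma balHalf (h c a b : ℕ) (hsum : a + b = 2*c) (hne : a ≠ c)
    (ha : a ≤ 2^h) (hb : b ≤ 2^h) :
    fp p (Vf p h a) (Vf p h b) < fp p (Vf p h c) (Vf p h c) := by
  rcases Nat.lt_or_ge a c with h1 | h1
  · have e3 : c - (c - a) = a := by omega
    have e4 : c + (c - a) = b := by omega
    have := bal hp1 hp2 h c (c - a) (by omega) (by omega) (by omega)
    rw [e3, e4] at this
    exact this
  · have h1' : b < c := by omega
    have e3 : c - (c - b) = b := by omega
    have e4 : c + (c - b) = a := by omega
    have := bal hp1 hp2 h c (c - b) (by omega) (by omega) (by omega)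
    rw [e3, e4] at this
    rw [fp_comm]
    exact this

end hp
end MDO3

namespace MDO4
open MDO MDO2 MDO3

lemma leaves_length {α : Type} : ∀ {m : ℕ} (t : BT α m), t.leaves.length = 2^m
  | _, .leaf a => rfl
  | m+1, .node L R => by
      have h2 : 2^(m+1) = 2^m + 2^m := by ring
      simp [BT.leaves, List.length_append, leaves_length L, leaves_length R, h2]

lemma Bp_node (p : ℝ) {m : ℕ} (L R : BT ℝ m) :
    Bp p (.node L R) = fp p (Bp p L) (Bp p R) := rfl

lemma zeroOne_node {m : ℕ} {L R : BT ℝ m} (h : ZeroOne (BT.node L R)) :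
    ZeroOne L ∧ ZeroOne R := by
  constructor <;> intro x hx <;> apply h <;> simp [BT.leaves] <;> [left; right] <;> exact hx

lemma ones_node {m : ℕ} (L R : BT ℝ m) :
    ones (BT.node L R) = ones L + ones R := by
  simp [ones, BT.leaves, List.count_append]

lemma ones_le {m : ℕ} (t : BT ℝ m) : ones t ≤ 2^m := by
  have := List.count_le_length (a := (1:ℝ)) (l := t.leaves)
  rw [leaves_length] at this
  exact this

variable {p : ℝ}

section hp
variable (hp1 : 1/2 < p) (hp2 : p < 1)
include hp1 hp2

lemma Bp01 : ∀ {m : ℕ} (t : BT ℝ m), ZeroOne t → 0 ≤ Bp p t ∧ Bp p t ≤ 1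
  | _, .leaf x, hz => by
      have := hz x (by simp [BT.leaves])
      rcases this with h | h <;> subst h <;> norm_num [Bp]
  | _, .node L R, hz => by
      obtain ⟨hzL, hzR⟩ := zeroOne_node hz
      obtain ⟨hL0, hL1⟩ := Bp01 L hzL
      obtain ⟨hR0, hR1⟩ := Bp01 R hzR
      rw [Bp_node]
      exact ⟨fp_nonneg hp1 hp2 hL0 hL1 hR0 hR1, fp_le_one hp1 hp2 hL0 hL1 hR0 hR1⟩

lemma UB : ∀ {m : ℕ} (t : BT ℝ m), ZeroOne t → Bp p t ≤ Vf p m (ones t)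
  | _, .leaf x, hz => by
      have := hz x (by simp [BT.leaves])
      rcases this with h | h <;> subst h <;>
        norm_num [Bp, ones, BT.leaves, List.count_cons, List.count_nil, Vf]
  | m+1, .node L R, hz => by
      obtain ⟨hzL, hzR⟩ := zeroOne_node hz
      have hL := UB L hzL
      have hR := UB R hzR
      have haU := ones_le L
      have hbU := ones_le R
      have h1 : Bp p (BT.node L R) ≤ fp p (Vf p m (ones L)) (Vf p m (ones R)) := by
        rw [Bp_node]
        exact fp_mono hp1 hp2 hL hR (Vf_le_one hp1 hp2 m _) (Bp01 hp1 hp2 R hzR).2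
      rw [ones_node]
      rcases le_or_gt (ones L) (ones R) with hab | hab
      · have h2 := balGen hp1 hp2 m (ones L) (ones R) hab hbU
        rw [Vf_succ]
        exact h1.trans h2
      · have h2 := balGen hp1 hp2 m (ones R) (ones L) hab.le haU
        rw [fp_comm] at h1
        rw [Vf_succ]
        have e1 : ones R + ones L = ones L + ones R := by omega
        rw [e1] at h2
        exact h1.trans h2

lemma fp_lt_ee {x y e : ℝ} (hx : x ≤ e) (hy : y ≤ e) (he : e ≤ 1)
    (hne : x < e ∨ y < e) : fp p x y < fp p e e := by
  rcases hne with h | h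
  · calc fp p x y ≤ fp p x e := fp_mono hp1 hp2 (le_refl x) hy (by linarith) (by linarith)
    _ < fp p e e := fp_strict_left hp1 hp2 h he
  · calc fp p x y ≤ fp p e y := fp_mono hp1 hp2 hx (le_refl y) he (by linarith)
    _ = fp p y e := fp_comm _ _
    _ < fp p e e := fp_strict_left hp1 hp2 h he

end hp

/-- a 0/1 tree is mixed if every first-round pair is (1,0) or (0,1). -/
def MixedR {m : ℕ} (t : BT ℝ m) : Prop :=
  ∀ q ∈ pairList t.leaves, (q.1 = (1:ℝ) ∧ q.2 = (0:ℝ)) ∨ (q.1 = (0:ℝ) ∧ q.2 = (1:ℝ))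

lemma pairList_append {α : Type} :
    ∀ (l₁ l₂ : List α), l₁.length % 2 = 0 →
      pairList (l₁ ++ l₂) = pairList l₁ ++ pairList l₂
  | [], l₂, _ => rfl
  | [a], l₂, h => by simp at h
  | a :: b :: r, l₂, h => by
      simp only [List.cons_append, pairList, List.append_eq]
      rw [pairList_append r l₂ (by simp at h; omega)]

lemma mixed_node {m : ℕ} (L R : BT ℝ (m+1)) :
    MixedR (BT.node L R) ↔ MixedR L ∧ MixedR R := by
  have hlen : (L.leaves).length % 2 = 0 := by
    rw [leaves_length]
    have : 2^(m+1) = 2*2^m := by ring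
    omega
  unfold MixedR
  show (∀ q ∈ pairList (L.leaves ++ R.leaves), _) ↔ _
  rw [pairList_append _ _ hlen]
  constructor
  · intro h
    exact ⟨fun q hq => h q (by simp [hq]), fun q hq => h q (by simp [hq])⟩
  · intro ⟨h1, h2⟩ q hq
    rcases List.mem_append.mp hq with hq | hq
    · exact h1 q hq
    · exact h2 q hq

lemma mixones : ∀ (m : ℕ) (t : BT ℝ (m+1)), MixedR t → ones t = 2^m
  | 0, .node (.leaf x) (.leaf y), hm => by
      have := hm (x, y) (by simp [BT.leaves, pairList])
      rcases this with ⟨h1, h2⟩ | ⟨h1, h2⟩ <;> simp at h1 h2 <;> subst h1 <;> subst h2 <;>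
        norm_num [ones, BT.leaves, List.count_cons, List.count_nil]
  | m+1, .node L R, hm => by
      obtain ⟨hmL, hmR⟩ := (mixed_node L R).mp hm
      rw [ones_node, mixones m L hmL, mixones m R hmR]
      ring

section hp2
variable (hp1 : 1/2 < p) (hp2 : p < 1)
include hp1 hp2

theorem mainR (m : ℕ) : ∀ (t : BT ℝ (m+1)), ZeroOne t → ones t = 2^m →
    Bp p t ≤ Vf p (m+1) (2^m) ∧ (Bp p t = Vf p (m+1) (2^m) ↔ MixedR t) := by
  induction m with
  | zero =>
      intro t hz ho
      cases t with | node L R =>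
      cases L with | leaf x =>
      cases R with | leaf y =>
      have hV : Vf p 1 1 = p := by
        rw [Vf_succ]
        norm_num [Vf, fp]
      have hx := hz x (by simp [BT.leaves])
      have hy := hz y (by simp [BT.leaves])
      rcases hx with hx | hx <;> rcases hy with hy | hy <;> subst hx <;> subst hy <;>
        norm_num [ones, BT.leaves, List.count_cons, List.count_nil] at ho <;>
        norm_num [ones, BT.leaves, List.count_cons, List.count_nil]
      · -- (0,1)
        constructor
        · show Bp p _ ≤ _
          rw [hV]
          norm_num [Bp, Bp_node, fp]
        · constructor
          · intro _
            intro q hq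
            simp [BT.leaves, pairList] at hq
            subst hq
            right; exact ⟨rfl, rfl⟩
          · intro _
            rw [hV]
            norm_num [Bp, Bp_node, fp]
      · -- (1,0)
        constructor
        · show Bp p _ ≤ _
          rw [hV]
          norm_num [Bp, Bp_node, fp]
        · constructor
          · intro _
            intro q hq
            simp [BT.leaves, pairList] at hq
            subst hq
            left; exact ⟨rfl, rfl⟩
          · intro _
            rw [hV]
            norm_num [Bp, Bp_node, fp]
  | succ m ih =>
      intro t hz ho
      cases t with | node L R =>
      obtain ⟨hzL, hzR⟩ := zeroOne_node hz
      have hsum : ones L + ones R = 2^(m+1) := by rw [← ones_node]; exact ho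
      have hpow : 2^(m+1) = 2^m + 2^m := by ring
      have haU := ones_le L
      have hbU := ones_le R
      have hVtop : Vf p (m+1+1) (2^(m+1)) = fp p (Vf p (m+1) (2^m)) (Vf p (m+1) (2^m)) := by
        rw [Vf_succ]
        have e1 : (2^(m+1)+1)/2 = 2^m := by omega
        have e2 : (2^(m+1))/2 = 2^m := by omega
        rw [e1, e2]
      by_cases ha : ones L = 2^m
      · have hb : ones R = 2^m := by omega
        obtain ⟨hL1, hL2⟩ := ih L hzL ha
        obtain ⟨hR1, hR2⟩ := ih R hzR hb
        have he1 : Vf p (m+1) (2^m) ≤ 1 := Vf_le_one hp1 hp2 _ _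
        have hBL := Bp01 hp1 hp2 L hzL
        have hBR := Bp01 hp1 hp2 R hzR
        constructor
        · rw [hVtop, Bp_node]
          exact fp_mono hp1 hp2 hL1 hR1 he1 hBR.2
        · rw [hVtop, Bp_node]
          constructor
          · intro heq
            have hBLe : Bp p L = Vf p (m+1) (2^m) := by
              by_contra hc
              exact absurd heq (ne_of_lt (fp_lt_ee hp1 hp2 hL1 hR1 he1 (Or.inl (lt_of_le_of_ne hL1 hc))))
            have hBRe : Bp p R = Vf p (m+1) (2^m) := by
              by_contra hc
              exact absurd heq (ne_of_lt (fp_lt_ee hp1 hp2 hL1 hR1 he1 (Or.inr (lt_of_le_of_ne hR1 hc))))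
            exact (mixed_node L R).mpr ⟨hL2.mp hBLe, hR2.mp hBRe⟩
          · intro hm
            obtain ⟨hmL, hmR⟩ := (mixed_node L R).mp hm
            rw [hL2.mpr hmL, hR2.mpr hmR]
      · have hstrict : Bp p (BT.node L R) < Vf p (m+1+1) (2^(m+1)) := by
          rw [hVtop, Bp_node]
          have h1 : fp p (Bp p L) (Bp p R) ≤ fp p (Vf p (m+1) (ones L)) (Vf p (m+1) (ones R)) :=
            fp_mono hp1 hp2 (UB hp1 hp2 L hzL) (UB hp1 hp2 R hzR)
              (Vf_le_one hp1 hp2 _ _) (Bp01 hp1 hp2 R hzR).2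
          have h2 : fp p (Vf p (m+1) (ones L)) (Vf p (m+1) (ones R))
              < fp p (Vf p (m+1) (2^m)) (Vf p (m+1) (2^m)) :=
            balHalf hp1 hp2 (m+1) (2^m) (ones L) (ones R) (by omega) ha haU hbU
          exact h1.trans_lt h2
        refine ⟨hstrict.le, ⟨fun heq => absurd heq (ne_of_lt hstrict), fun hm => ?_⟩⟩
        obtain ⟨hmL, _⟩ := (mixed_node L R).mp hm
        exact absurd (mixones m L hmL) ha

end hp2
end MDO4


namespace MDO5
open MDO MDO2 MDO3 MDO4

variable {N : ℕ} {P : Fin N → Fin N → ℝ}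

lemma wd_node_eq {m : ℕ} (P : Fin N → Fin N → ℝ) (L R : BT (Fin N) m) (i : Fin N) :
    wd P (.node L R) i
      = wd P L i * (∑ j, wd P R j * P i j) + wd P R i * (∑ j, wd P L j * P i j) := rfl

lemma wd_not_mem : ∀ {m : ℕ} (t : BT (Fin N) m) (i : Fin N), i ∉ t.leaves → wd P t i = 0
  | _, .leaf a, i, h => by
      have hne : i ≠ a := by simpa [BT.leaves] using h
      simp [wd, hne]
  | _, .node L R, i, h => by
      have hL : i ∉ L.leaves := fun hc => h (by simp [BT.leaves, hc])
      have hR : i ∉ R.leaves := fun hc => h (by simp [BT.leaves, hc])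
      rw [wd_node_eq, wd_not_mem L i hL, wd_not_mem R i hR]
      ring

lemma cross (hP : IsCompMatrix P) {m : ℕ} (L R : BT (Fin N) m)
    (hdisj : ∀ i, i ∈ L.leaves → i ∉ R.leaves) (s : Finset (Fin N)) :
    (∑ i ∈ s, wd P L i * (∑ j ∈ s, wd P R j * P i j))
      + (∑ i ∈ s, wd P R i * (∑ j ∈ s, wd P L j * P i j))
      = (∑ i ∈ s, wd P L i) * (∑ j ∈ s, wd P R j) := by
  have hzero : ∀ i : Fin N, wd P L i * wd P R i = 0 := by
    intro i
    by_cases hi : i ∈ L.leaves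
    · rw [wd_not_mem R i (hdisj i hi)]; ring
    · rw [wd_not_mem L i hi]; ring
  have h1 : (∑ i ∈ s, wd P L i * (∑ j ∈ s, wd P R j * P i j))
      = ∑ i ∈ s, ∑ j ∈ s, wd P L i * (wd P R j * P i j) := by
    refine Finset.sum_congr rfl fun i _ => ?_
    rw [Finset.mul_sum]
  have h2 : (∑ i ∈ s, wd P R i * (∑ j ∈ s, wd P L j * P i j))
      = ∑ i ∈ s, ∑ j ∈ s, wd P L i * (wd P R j * P j i) := by
    rw [show (∑ i ∈ s, wd P R i * (∑ j ∈ s, wd P L j * P i j))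
        = ∑ i ∈ s, ∑ j ∈ s, wd P R i * (wd P L j * P i j) from
      Finset.sum_congr rfl fun i _ => by rw [Finset.mul_sum]]
    rw [Finset.sum_comm]
    refine Finset.sum_congr rfl fun i _ => Finset.sum_congr rfl fun j _ => by ring
  calc (∑ i ∈ s, wd P L i * (∑ j ∈ s, wd P R j * P i j))
      + (∑ i ∈ s, wd P R i * (∑ j ∈ s, wd P L j * P i j))
      = ∑ i ∈ s, ∑ j ∈ s, (wd P L i * (wd P R j * P i j) + wd P L i * (wd P R j * P j i)) := by
        rw [h1, h2, ← Finset.sum_add_distrib]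
        exact Finset.sum_congr rfl fun i _ => by rw [← Finset.sum_add_distrib]
    _ = ∑ i ∈ s, ∑ j ∈ s, wd P L i * wd P R j := by
        refine Finset.sum_congr rfl fun i _ => Finset.sum_congr rfl fun j _ => ?_
        by_cases hij : i = j
        · subst hij
          have h0 := hzero i
          have e : wd P L i * (wd P R i * P i i) = wd P L i * wd P R i * P i i := by ring
          rw [e, h0]
          ring
        · have hsum := (hP i j hij).2.2
          linear_combination (wd P L i * wd P R j) * hsum
    _ = (∑ i ∈ s, wd P L i) * (∑ j ∈ s, wd P R j) := (Finset.sum_mul_sum s s _ _).symm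

lemma sum_wd (hP : IsCompMatrix P) :
    ∀ {m : ℕ} (t : BT (Fin N) m), t.leaves.Nodup → ∑ i, wd P t i = 1
  | _, .leaf a, _ => by simp [wd, Finset.sum_ite_eq' Finset.univ a (fun _ => (1:ℝ))]
  | _, .node L R, hnd => by
      have hnd' : (L.leaves ++ R.leaves).Nodup := by simpa [BT.leaves] using hnd
      obtain ⟨h1, h2, hdisj⟩ := List.nodup_append'.mp hnd'
      have := cross hP L R (fun i hi hri => hdisj hi hri) Finset.univ
      calc ∑ i, wd P (.node L R) i
          = (∑ i, wd P L i * (∑ j, wd P R j * P i j))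
            + (∑ i, wd P R i * (∑ j, wd P L j * P i j)) := by
            rw [← Finset.sum_add_distrib]
            exact Finset.sum_congr rfl fun i _ => wd_node_eq P L R i
        _ = (∑ i, wd P L i) * (∑ j, wd P R j) := this
        _ = 1 := by rw [sum_wd hP L h1, sum_wd hP R h2]; norm_num

lemma sumB (hP : IsCompMatrix P) (B : Finset (Fin N)) {p : ℝ}
    (hbs : ∀ b ∈ B, ∀ s, s ∉ B → P b s = p) :
    ∀ {m : ℕ} (t : BT (Fin N) m), t.leaves.Nodup →
      ∑ i ∈ B, wd P t i = Bp p (t.map (fun i => if i ∈ B then (1:ℝ) else 0))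
  | _, .leaf a, _ => by
      simp [wd, BT.map, Bp, Finset.sum_ite_eq' B a (fun _ => (1:ℝ))]
  | _, .node L R, hnd => by
      have hnd' : (L.leaves ++ R.leaves).Nodup := by simpa [BT.leaves] using hnd
      obtain ⟨h1, h2, hdisj⟩ := List.nodup_append'.mp hnd'
      set x := ∑ i ∈ B, wd P L i with hx
      set y := ∑ i ∈ B, wd P R i with hy
      have hcomplR : ∑ j ∈ Bᶜ, wd P R j = 1 - y := by
        have := Finset.sum_add_sum_compl B (wd P R)
        rw [sum_wd hP R h2] at this
        linarith
      have hcomplL : ∑ j ∈ Bᶜ, wd P L j = 1 - x := by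
        have := Finset.sum_add_sum_compl B (wd P L)
        rw [sum_wd hP L h1] at this
        linarith
      have hcR : ∀ i ∈ B, (∑ j, wd P R j * P i j)
          = (∑ j ∈ B, wd P R j * P i j) + p * (1 - y) := by
        intro i hi
        rw [← Finset.sum_add_sum_compl B (fun j => wd P R j * P i j)]
        congr 1
        calc ∑ j ∈ Bᶜ, wd P R j * P i j = ∑ j ∈ Bᶜ, wd P R j * p :=
              Finset.sum_congr rfl fun j hj => by
                rw [hbs i hi j (by simpa using hj)]
          _ = (∑ j ∈ Bᶜ, wd P R j) * p := by rw [Finset.sum_mul]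
          _ = p * (1 - y) := by rw [hcomplR]; ring
      have hcL : ∀ i ∈ B, (∑ j, wd P L j * P i j)
          = (∑ j ∈ B, wd P L j * P i j) + p * (1 - x) := by
        intro i hi
        rw [← Finset.sum_add_sum_compl B (fun j => wd P L j * P i j)]
        congr 1
        calc ∑ j ∈ Bᶜ, wd P L j * P i j = ∑ j ∈ Bᶜ, wd P L j * p :=
              Finset.sum_congr rfl fun j hj => by
                rw [hbs i hi j (by simpa using hj)]
          _ = (∑ j ∈ Bᶜ, wd P L j) * p := by rw [Finset.sum_mul]
          _ = p * (1 - x) := by rw [hcomplL]; ring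
      have hcross := cross hP L R (fun i hi hri => hdisj hi hri) B
      have main : ∑ i ∈ B, wd P (.node L R) i = fp p x y := by
        calc ∑ i ∈ B, wd P (.node L R) i
            = ∑ i ∈ B, (wd P L i * ((∑ j ∈ B, wd P R j * P i j) + p * (1 - y))
              + wd P R i * ((∑ j ∈ B, wd P L j * P i j) + p * (1 - x))) := by
              refine Finset.sum_congr rfl fun i hi => ?_
              rw [wd_node_eq, hcR i hi, hcL i hi]
          _ = ((∑ i ∈ B, wd P L i * (∑ j ∈ B, wd P R j * P i j))
              + (∑ i ∈ B, wd P R i * (∑ j ∈ B, wd P L j * P i j)))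
              + ((∑ i ∈ B, wd P L i) * (p * (1 - y)) + (∑ i ∈ B, wd P R i) * (p * (1 - x))) := by
              simp only [mul_add]
              rw [Finset.sum_add_distrib, Finset.sum_add_distrib, Finset.sum_add_distrib,
                ← Finset.sum_mul, ← Finset.sum_mul]
              ring
          _ = x * y + (x * (p * (1 - y)) + y * (p * (1 - x))) := by rw [hcross]
          _ = fp p x y := by unfold fp; ring
      rw [main, hx, hy, sumB hP B hbs L h1, sumB hP B hbs R h2]
      rfl

lemma leaves_map {α β : Type} (f : α → β) :
    ∀ {m : ℕ} (t : BT α m), (t.map f).leaves = t.leaves.map f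
  | _, .leaf a => rfl
  | _, .node L R => by
      simp [BT.map, BT.leaves, leaves_map f L, leaves_map f R]

lemma pairList_map {α β : Type} (f : α → β) :
    ∀ (l : List α), pairList (l.map f) = (pairList l).map (fun q => (f q.1, f q.2))
  | [] => rfl
  | [a] => rfl
  | a :: b :: r => by
      simp only [List.map_cons, pairList, pairList_map f r]

end MDO5

/-- in a big-vs-small tournament on `2^n` players with big-beats-small
probability `p ∈ (1/2,1)`, with `e_1 = p`, `e_{k+1} = e_k² + 2p e_k (1-e_k)`,
every draw `σ` satisfies `b(P,σ) = Σ_{i∈B} wp(i,P,σ) ≤ e_n`, with equality iff `σ`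
is a mixed draw. -/
theorem mixed_draws_optimal (n : ℕ) (hn : 1 ≤ n)
    (p : ℝ) (hp : p ∈ Set.Ioo (1 / 2 : ℝ) 1)
    (B : Finset (Fin (2 ^ n))) (hB : B.card = 2 ^ (n - 1))
    (P : Fin (2 ^ n) → Fin (2 ^ n) → ℝ) (hP : IsCompMatrix P)
    (hbs : ∀ b ∈ B, ∀ s, s ∉ B → P b s = p)
    (e : ℕ → ℝ) (he1 : e 1 = p)
    (herec : ∀ k, 1 ≤ k → e (k + 1) = e k ^ 2 + 2 * p * e k * (1 - e k))
    (σ : BT (Fin (2 ^ n)) n) (hσ : IsDraw σ) :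
    (∑ i ∈ B, wd P σ i) ≤ e n ∧
      ((∑ i ∈ B, wd P σ i) = e n ↔ MixedDraw B σ) := by
  classical
  obtain ⟨m, rfl⟩ : ∃ m, n = m + 1 := ⟨n - 1, by omega⟩
  have hp1 : 1/2 < p := hp.1
  have hp2 : p < 1 := hp.2
  have hB' : B.card = 2^m := by simpa using hB
  set t : BT ℝ (m+1) := σ.map (fun i => if i ∈ B then (1:ℝ) else 0) with ht
  have hnodup : σ.leaves.Nodup := List.nodup_iff_count_le_one.mpr (fun a => (hσ a).le)
  have hkey : ∑ i ∈ B, wd P σ i = Bp p t := MDO5.sumB hP B hbs σ hnodup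
  have hzo : ZeroOne t := by
    intro x hx
    rw [ht, MDO5.leaves_map] at hx
    obtain ⟨i, _, rfl⟩ := List.mem_map.mp hx
    by_cases hi : i ∈ B <;> simp [hi]
  have hms : (↑σ.leaves : Multiset (Fin (2^(m+1)))) = Finset.univ.val := by
    refine Multiset.ext.mpr fun a => ?_
    rw [Multiset.coe_count, hσ a]
    exact (Multiset.count_eq_one_of_mem Finset.univ.nodup
      (Finset.mem_def.mp (Finset.mem_univ a))).symm
  have hones : ones t = 2^m := by
    have hfilt : (Finset.univ.filter (fun i => (1:ℝ) = if i ∈ B then (1:ℝ) else 0)) = B := by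
      ext i
      by_cases hi : i ∈ B <;> simp [hi]
    calc ones t = List.count 1 (σ.leaves.map (fun i => if i ∈ B then (1:ℝ) else 0)) := by
          rw [ht]; unfold ones; rw [MDO5.leaves_map]
      _ = Multiset.count 1 (↑(σ.leaves.map (fun i => if i ∈ B then (1:ℝ) else 0)) : Multiset ℝ) :=
          (Multiset.coe_count _ _).symm
      _ = Multiset.count 1 (Multiset.map (fun i => if i ∈ B then (1:ℝ) else 0)
            (↑σ.leaves : Multiset (Fin (2^(m+1))))) := by rw [Multiset.map_coe]
      _ = 2^m := by
          rw [hms, Multiset.count_map]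
          rw [show Multiset.filter (fun i => (1:ℝ) = if i ∈ B then (1:ℝ) else 0) Finset.univ.val
              = (Finset.univ.filter (fun i => (1:ℝ) = if i ∈ B then (1:ℝ) else 0)).val from
            (Finset.filter_val _ _).symm]
          rw [hfilt]
          exact hB'
  have hpl : pairList t.leaves
      = (pairList σ.leaves).map
          (fun q => ((fun i => if i ∈ B then (1:ℝ) else 0) q.1,
            (fun i => if i ∈ B then (1:ℝ) else 0) q.2)) := by
    rw [ht, MDO5.leaves_map, MDO5.pairList_map]
  have hmr : MDO4.MixedR t ↔ MixedDraw B σ := by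
    constructor
    · intro hmix q hq
      have hmem : ((fun i => if i ∈ B then (1:ℝ) else 0) q.1,
          (fun i => if i ∈ B then (1:ℝ) else 0) q.2) ∈ pairList t.leaves := by
        rw [hpl]
        exact List.mem_map_of_mem hq
      have := hmix _ hmem
      by_cases h1 : q.1 ∈ B <;> by_cases h2 : q.2 ∈ B <;>
        simp [h1, h2] at this ⊢ <;> norm_num at this
    · intro hmd q' hq'
      rw [hpl] at hq'
      obtain ⟨q, hq, rfl⟩ := List.mem_map.mp hq'
      have := hmd q hq
      unfold firstPairs at this
      by_cases h1 : q.1 ∈ B <;> by_cases h2 : q.2 ∈ B <;>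
        simp [h1, h2] at this ⊢
  have hVe : ∀ k : ℕ, e (k+1) = MDO.Vf p (k+1) (2^k) := by
    intro k
    induction k with
    | zero =>
        show e 1 = MDO.Vf p 1 (2^0)
        rw [he1, pow_zero, MDO2.Vf_succ]
        norm_num [MDO.Vf, fp]
    | succ k ih =>
        rw [herec (k+1) (by omega), ih, MDO2.Vf_succ p (k+1) (2^(k+1))]
        have h2 : 2^(k+1) = 2*2^k := by ring
        have e1 : (2^(k+1)+1)/2 = 2^k := by omega
        have e2 : (2^(k+1))/2 = 2^k := by omega
        rw [e1, e2]
        unfold fp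
        ring
  obtain ⟨hle, hiff⟩ := MDO4.mainR hp1 hp2 m t hzo hones
  rw [hkey, hVe m]
  exact ⟨hle, hiff.trans hmr⟩
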